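/- A positive linear map φ : C[0,1]_{(a,k)} → C[0,1] is positively extendible (i.e., its natural unital extension φ̃(λ+g) = λ + φ(g) to C[0,1] is a positive map) if and only if inf over upper test functions γ of φ(γ) ≥ 1 ≥ sup over lower test functions e of φ(e), where the infimum and supremum are taken pointwise. -/

import Mathlib

open ContinuousMap

/-- The subspace `C[0,1]_{(a,k)} = {f : f(0) = (a/(a+k)) f(1)}`. -/
def InSub (a k : ℕ) (f : C(unitInterval, ℝ)) : Prop :=
  f 0 = (a : ℝ) / ((a : ℝ) + (k : ℝ)) * f 1

/-- The scalar part `λ = ((a+k) f(0) - a f(1))/k` of the decomposition `f = λ + g`. -/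
noncomputable def lamPart (a k : ℕ) (f : C(unitInterval, ℝ)) : ℝ :=
  (((a : ℝ) + (k : ℝ)) * f 0 - (a : ℝ) * f 1) / (k : ℝ)

/-- `φ` is positively extendible: its natural unital extension
`φ̃(f) = λ_f + φ(f - λ_f)` is positive. -/
def PosExt (a k : ℕ) (φ : C(unitInterval, ℝ) → C(unitInterval, ℝ)) : Prop :=
  ∀ f : C(unitInterval, ℝ), (∀ x, 0 ≤ f x) →
    ∀ x, 0 ≤ lamPart a k f +
      φ (f - ContinuousMap.const unitInterval (lamPart a k f)) x

/-- Lower test function `e_δ`. -/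
def IsLowerTest (a k : ℕ) (e : C(unitInterval, ℝ)) : Prop :=
  InSub a k e ∧ e 0 = (a : ℝ) / ((a : ℝ) + (k : ℝ)) ∧
    (∀ x, e x ∈ Set.Icc ((a : ℝ) / ((a : ℝ) + (k : ℝ))) 1) ∧
    ∃ δ : ℝ, 0 < δ ∧ δ ≤ 1 ∧ ∀ x : unitInterval, δ ≤ (x : ℝ) → e x = 1

/-- Upper test function `γ_σ`. -/
def IsUpperTest (a k : ℕ) (γ : C(unitInterval, ℝ)) : Prop :=
  InSub a k γ ∧ γ 1 = ((a : ℝ) + (k : ℝ)) / (a : ℝ) ∧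
    (∀ x, γ x ∈ Set.Icc (1 : ℝ) (((a : ℝ) + (k : ℝ)) / (a : ℝ))) ∧
    ∃ σ : ℝ, 0 ≤ σ ∧ σ < 1 ∧ ∀ x : unitInterval, (x : ℝ) ≤ 1 - σ → γ x = 1

noncomputable def lowerT (a k : ℕ) (δ : ℝ) : C(unitInterval, ℝ) :=
  ⟨fun x => (a:ℝ)/((a:ℝ)+(k:ℝ)) + (k:ℝ)/((a:ℝ)+(k:ℝ)) * min ((x:ℝ)/δ) 1, by fun_prop⟩

noncomputable def upperT (a k : ℕ) (σ : ℝ) : C(unitInterval, ℝ) :=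
  ⟨fun x => 1 + (k:ℝ)/(a:ℝ) * max (((x:ℝ) - (1-σ))/σ) 0, by fun_prop⟩

lemma lowerT_apply (a k : ℕ) (δ : ℝ) (x : unitInterval) :
    lowerT a k δ x = (a:ℝ)/((a:ℝ)+(k:ℝ)) + (k:ℝ)/((a:ℝ)+(k:ℝ)) * min ((x:ℝ)/δ) 1 := rfl

lemma upperT_apply (a k : ℕ) (σ : ℝ) (x : unitInterval) :
    upperT a k σ x = 1 + (k:ℝ)/(a:ℝ) * max (((x:ℝ) - (1-σ))/σ) 0 := rfl

lemma lowerT_isLower (a k : ℕ) (ha : 0 < a) (hk : 0 < k) {δ : ℝ} (hδ0 : 0 < δ) (hδ1 : δ ≤ 1) :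
    IsLowerTest a k (lowerT a k δ) := by
  have ha' : (0:ℝ) < a := by exact_mod_cast ha
  have hk' : (0:ℝ) < k := by exact_mod_cast hk
  have hak : (0:ℝ) < (a:ℝ) + k := by linarith
  have h1 : ∀ x : unitInterval, δ ≤ (x:ℝ) → lowerT a k δ x = 1 := by
    intro x hx
    rw [lowerT_apply]
    have : min ((x:ℝ)/δ) 1 = 1 := min_eq_right (by rw [le_div_iff₀ hδ0]; linarith)
    rw [this]; field_simp
  have h0 : lowerT a k δ 0 = (a:ℝ)/((a:ℝ)+k) := by
    rw [lowerT_apply]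
    have : ((0:unitInterval):ℝ) = 0 := rfl
    rw [this]
    have : min ((0:ℝ)/δ) 1 = 0 := by rw [zero_div]; exact min_eq_left (by norm_num)
    rw [this]; ring
  refine ⟨?_, h0, ?_, δ, hδ0, hδ1, h1⟩
  · show lowerT a k δ 0 = _ * lowerT a k δ 1
    rw [h0, h1 1 (by exact_mod_cast hδ1), mul_one]
  · intro x
    rw [lowerT_apply]
    have hm0 : 0 ≤ min ((x:ℝ)/δ) 1 := le_min (div_nonneg x.2.1 hδ0.le) (by norm_num)
    have hm1 : min ((x:ℝ)/δ) 1 ≤ 1 := min_le_right _ _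
    constructor
    · nlinarith [div_pos hk' hak]
    · have : (a:ℝ)/((a:ℝ)+k) + (k:ℝ)/((a:ℝ)+k) = 1 := by field_simp
      nlinarith [div_pos hk' hak]

lemma upperT_isUpper (a k : ℕ) (ha : 0 < a) (hk : 0 < k) {σ : ℝ} (hσ0 : 0 < σ) (hσ1 : σ < 1) :
    IsUpperTest a k (upperT a k σ) := by
  have ha' : (0:ℝ) < a := by exact_mod_cast ha
  have hk' : (0:ℝ) < k := by exact_mod_cast hk
  have hak : (0:ℝ) < (a:ℝ) + k := by linarith
  have h1 : ∀ x : unitInterval, (x:ℝ) ≤ 1 - σ → upperT a k σ x = 1 := by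
    intro x hx
    rw [upperT_apply]
    have : max (((x:ℝ) - (1-σ))/σ) 0 = 0 := max_eq_right (div_nonpos_of_nonpos_of_nonneg (by linarith) hσ0.le)
    rw [this]; ring
  have hv1 : upperT a k σ 1 = ((a:ℝ)+k)/a := by
    rw [upperT_apply]
    have h11 : ((1:unitInterval):ℝ) = 1 := rfl
    rw [h11]
    have : max (((1:ℝ) - (1-σ))/σ) 0 = 1 := by
      have hq : ((1:ℝ) - (1-σ))/σ = 1 := by field_simp; ring
      rw [hq]; norm_num
    rw [this]; field_simp
  refine ⟨?_, hv1, ?_, σ, hσ0.le, hσ1, h1⟩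
  · show upperT a k σ 0 = _ * upperT a k σ 1
    rw [hv1, h1 0 (by norm_num; linarith)]
    field_simp
  · intro x
    rw [upperT_apply]
    have hm0 : 0 ≤ max (((x:ℝ) - (1-σ))/σ) 0 := le_max_right _ _
    have hm1 : max (((x:ℝ) - (1-σ))/σ) 0 ≤ 1 := by
      apply max_le _ (by norm_num)
      rw [div_le_one hσ0]; have := x.2.2; linarith
    constructor
    · nlinarith [div_pos hk' ha']
    · have : ((a:ℝ)+k)/a = 1 + (k:ℝ)/a := by field_simp
      nlinarith [div_pos hk' ha']

lemma InSub.add' {a k : ℕ} {f g : C(unitInterval, ℝ)} (hf : InSub a k f) (hg : InSub a k g) :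
    InSub a k (f + g) := by
  simp only [InSub, ContinuousMap.add_apply] at *
  rw [hf, hg]; ring

lemma InSub.smul' {a k : ℕ} (c : ℝ) {f : C(unitInterval, ℝ)} (hf : InSub a k f) :
    InSub a k (c • f) := by
  simp only [InSub, ContinuousMap.smul_apply, smul_eq_mul] at *
  rw [hf]; ring

lemma InSub_g (a k : ℕ) (hk : 0 < k) (f : C(unitInterval, ℝ)) :
    InSub a k (f - ContinuousMap.const unitInterval (lamPart a k f)) := by
  have hk' : (0:ℝ) < k := by exact_mod_cast hk
  have hak : (0:ℝ) ≤ (a:ℝ) + k := by positivity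
  simp only [InSub, lamPart, ContinuousMap.sub_apply, ContinuousMap.const_apply]
  field_simp
  ring

lemma eps_le {c M : ℝ} (hM : 1 ≤ M) (h : ∀ ε : ℝ, 0 < ε → -(ε * M) ≤ c) : 0 ≤ c := by
  by_contra hc
  push_neg at hc
  have hMp : (0:ℝ) < M := by linarith
  have h1 := h (-c / (2*M)) (by apply div_pos (by linarith) (by linarith))
  have h2 : -c / (2*M) * M = -c/2 := by field_simp
  rw [h2] at h1
  linarith

lemma lowerT_eq_one (a k : ℕ) (ha : 0 < a) {δ : ℝ} (hδ0 : 0 < δ) {x : unitInterval}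
    (hx : δ ≤ (x:ℝ)) : lowerT a k δ x = 1 := by
  have hak : (0:ℝ) < (a:ℝ) + k := by positivity
  rw [lowerT_apply]
  have hm : min ((x:ℝ)/δ) 1 = 1 := min_eq_right (by rw [le_div_iff₀ hδ0]; linarith)
  rw [hm]; field_simp

lemma upperT_eq_one (a k : ℕ) {σ : ℝ} (hσ0 : 0 < σ) {x : unitInterval}
    (hx : (x:ℝ) ≤ 1 - σ) : upperT a k σ x = 1 := by
  rw [upperT_apply]
  have hm : max (((x:ℝ) - (1-σ))/σ) 0 = 0 :=
    max_eq_right (div_nonpos_of_nonpos_of_nonneg (by linarith) hσ0.le)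
  rw [hm]; ring

theorem stmt2 (a k : ℕ) (ha : 0 < a) (hk : 0 < k)
    (φ : C(unitInterval, ℝ) → C(unitInterval, ℝ))
    (hadd : ∀ f g : C(unitInterval, ℝ), InSub a k f → InSub a k g → φ (f + g) = φ f + φ g)
    (hsmul : ∀ (c : ℝ) (f : C(unitInterval, ℝ)), InSub a k f → φ (c • f) = c • φ f)
    (hpos : ∀ f : C(unitInterval, ℝ), InSub a k f → (∀ x, 0 ≤ f x) → ∀ x, 0 ≤ φ f x) :
    PosExt a k φ ↔
      ((∀ γ : C(unitInterval, ℝ), IsUpperTest a k γ → ∀ y, 1 ≤ φ γ y) ∧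
       (∀ e : C(unitInterval, ℝ), IsLowerTest a k e → ∀ y, φ e y ≤ 1)) := by
  have ha' : (0:ℝ) < a := by exact_mod_cast ha
  have hk' : (0:ℝ) < k := by exact_mod_cast hk
  have hak : (0:ℝ) < (a:ℝ) + k := by linarith
  constructor
  · intro hP
    constructor
    · -- upper tests
      intro γ hγ y
      obtain ⟨hsub, h1v, hrange, _⟩ := hγ
      have hγ0v : γ 0 = 1 := by rw [hsub, h1v]; field_simp
      have hfnn : ∀ z : unitInterval, 0 ≤ (γ - ContinuousMap.const unitInterval (1:ℝ) : C(unitInterval,ℝ)) z := by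
        intro z
        simp only [ContinuousMap.sub_apply, ContinuousMap.const_apply, sub_nonneg]
        exact (hrange z).1
      have hlam : lamPart a k (γ - ContinuousMap.const unitInterval 1) = -1 := by
        simp only [lamPart, ContinuousMap.sub_apply, ContinuousMap.const_apply, hγ0v, h1v]
        field_simp
        ring
      have h2 := hP _ hfnn y
      rw [hlam] at h2
      have heq : (γ - ContinuousMap.const unitInterval 1) -
          ContinuousMap.const unitInterval (-1) = γ := by
        ext z; simp
      rw [heq] at h2
      linarith
    · -- lower tests
      intro e he y
      obtain ⟨hsub, h0v, hrange, _⟩ := he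
      have he1 : e 1 = 1 := by
        have h := hsub
        rw [InSub, h0v] at h
        have hne : (a:ℝ)/((a:ℝ)+k) ≠ 0 := by positivity
        exact (mul_left_cancel₀ hne (by rw [mul_one]; exact h)).symm
      have hfnn : ∀ z : unitInterval, 0 ≤ (ContinuousMap.const unitInterval (1:ℝ) - e : C(unitInterval,ℝ)) z := by
        intro z
        simp only [ContinuousMap.sub_apply, ContinuousMap.const_apply, sub_nonneg]
        exact (hrange z).2
      have hlam : lamPart a k (ContinuousMap.const unitInterval 1 - e) = 1 := by
        simp only [lamPart, ContinuousMap.sub_apply, ContinuousMap.const_apply, h0v, he1]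
        field_simp
        ring
      have h2 := hP _ hfnn y
      rw [hlam] at h2
      have heq : (ContinuousMap.const unitInterval 1 - e) -
          ContinuousMap.const unitInterval 1 = (-1 : ℝ) • e := by
        ext z; simp
      rw [heq, hsmul _ _ hsub] at h2
      simp only [ContinuousMap.smul_apply, smul_eq_mul, neg_one_mul] at h2
      linarith
  · -- converse
    rintro ⟨hγs, hes⟩ f hf x
    set l := lamPart a k f with hl
    have hlk : l * k = ((a:ℝ)+k) * f 0 - a * f 1 := by
      rw [hl, lamPart]; field_simp
    set g := f - ContinuousMap.const unitInterval l with hg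
    have hgsub : InSub a k g := InSub_g a k hk f
    have hgapp : ∀ z, g z = f z - l := by
      intro z; simp [hg]
    set γ0 := upperT a k (1/2) with hγ0def
    have hγ0 : IsUpperTest a k γ0 := upperT_isUpper a k ha hk (by norm_num) (by norm_num)
    have hγ0ge : ∀ z : unitInterval, 1 ≤ γ0 z := fun z => (hγ0.2.2.1 z).1
    have hM : 1 ≤ φ γ0 x := hγs γ0 hγ0 x
    apply eps_le hM
    intro ε hε
    -- common combination lemma
    have hcomb : ∀ (t : C(unitInterval, ℝ)) (c : ℝ), InSub a k t →
        (∀ z, 0 ≤ g z + c * t z + ε * γ0 z) →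
        0 ≤ φ g x + c * φ t x + ε * φ γ0 x := by
      intro t c htsub hnn
      have hsum : InSub a k (g + c • t + ε • γ0) :=
        (hgsub.add' (htsub.smul' c)).add' (hγ0.1.smul' ε)
      have hnn' : ∀ z, 0 ≤ (g + c • t + ε • γ0) z := by
        intro z
        simpa [ContinuousMap.add_apply, ContinuousMap.smul_apply, smul_eq_mul] using hnn z
      have hp := hpos _ hsum hnn' x
      rw [hadd _ _ (hgsub.add' (htsub.smul' c)) (hγ0.1.smul' ε),
          hadd _ _ hgsub (htsub.smul' c), hsmul _ _ htsub, hsmul _ _ hγ0.1] at hp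
      simpa [ContinuousMap.add_apply, ContinuousMap.smul_apply, smul_eq_mul] using hp
    rcases le_or_gt 0 l with hlpos | hlneg
    · -- l ≥ 0 : use a lower test
      obtain ⟨δ0, hδ00, hδf⟩ := Metric.continuousAt_iff.mp (f.continuous.continuousAt (x := 0)) ε hε
      set δ : ℝ := min (δ0/2) 1 with hδdef
      have hδ0 : 0 < δ := by apply lt_min (by linarith) one_pos
      have hδ1 : δ ≤ 1 := min_le_right _ _
      set e := lowerT a k δ with hedef
      have hE : IsLowerTest a k e := lowerT_isLower a k ha hk hδ0 hδ1
      have hnn : ∀ z, 0 ≤ g z + l * e z + ε * γ0 z := by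
        intro z
        rcases le_or_gt δ (z:ℝ) with hz | hz
        · rw [hedef, lowerT_eq_one a k ha hδ0 hz, hgapp z]
          have h1 := hf z
          have h2 : ε * 1 ≤ ε * γ0 z := mul_le_mul_of_nonneg_left (hγ0ge z) hε.le
          rw [mul_one] at h2
          linarith
        · -- near 0
          have hdist : dist z (0 : unitInterval) < δ0 := by
            rw [Subtype.dist_eq, Real.dist_eq]
            have hz0 : ((0:unitInterval):ℝ) = 0 := rfl
            rw [hz0, sub_zero, abs_of_nonneg z.2.1]
            have : (z:ℝ) < δ := hz
            have : δ ≤ δ0/2 := min_le_left _ _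
            linarith
          have hfz : f 0 - ε < f z := by
            have := hδf hdist
            rw [Real.dist_eq, abs_lt] at this
            linarith [this.1]
          have heL : (a:ℝ)/((a:ℝ)+k) ≤ e z := (hE.2.2.1 z).1
          have h1e : (1 - e z) * ((a:ℝ)+k) ≤ k := by
            have := (hE.2.2.1 z).1
            have h2 : (a:ℝ)/((a:ℝ)+k) * ((a:ℝ)+k) = a := by field_simp
            nlinarith
          have hlke : l * ((1 - e z) * ((a:ℝ)+k)) ≤ l * k :=
            mul_le_mul_of_nonneg_left h1e hlpos
          have hf1 : 0 ≤ f 1 := hf 1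
          rw [hgapp z]
          have hγz := hγ0ge z
          have hkey : (l * (1 - e z)) * ((a:ℝ)+k) ≤ f 0 * ((a:ℝ)+k) := by
            linarith [mul_nonneg ha'.le hf1]
          have hkey2 : l * (1 - e z) ≤ f 0 := le_of_mul_le_mul_right hkey hak
          have hεγ : ε * 1 ≤ ε * γ0 z := mul_le_mul_of_nonneg_left hγz hε.le
          rw [mul_one] at hεγ
          linarith [hkey2, hfz, hεγ]
      have hfin := hcomb e l hE.1 hnn
      have h1 : φ e x ≤ 1 := hes e hE x
      have h2 : l * φ e x ≤ l * 1 := mul_le_mul_of_nonneg_left h1 hlpos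
      linarith
    · -- l < 0 : use an upper test
      obtain ⟨σ0, hσ00, hσf⟩ := Metric.continuousAt_iff.mp (f.continuous.continuousAt (x := 1)) ε hε
      set σ : ℝ := min (σ0/2) (1/2) with hσdef
      have hσ0 : 0 < σ := by apply lt_min (by linarith) (by norm_num)
      have hσ1 : σ < 1 := lt_of_le_of_lt (min_le_right _ _) (by norm_num)
      set γ := upperT a k σ with hγdef
      have hG : IsUpperTest a k γ := upperT_isUpper a k ha hk hσ0 hσ1
      have hnn : ∀ z, 0 ≤ g z + l * γ z + ε * γ0 z := by
        intro z
        rcases le_or_gt (z:ℝ) (1 - σ) with hz | hz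
        · rw [hγdef, upperT_eq_one a k hσ0 hz, hgapp z]
          have h1 := hf z
          have h2 : ε * 1 ≤ ε * γ0 z := mul_le_mul_of_nonneg_left (hγ0ge z) hε.le
          rw [mul_one] at h2
          linarith
        · have hdist : dist z (1 : unitInterval) < σ0 := by
            rw [Subtype.dist_eq, Real.dist_eq]
            have hz1 : ((1:unitInterval):ℝ) = 1 := rfl
            rw [hz1, abs_of_nonpos (by linarith [z.2.2])]
            have : σ ≤ σ0/2 := min_le_left _ _
            linarith
          have hfz : f 1 - ε < f z := by
            have := hσf hdist
            rw [Real.dist_eq, abs_lt] at this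
            linarith [this.1]
          have hγU : γ z ≤ ((a:ℝ)+k)/a := (hG.2.2.1 z).2
          have h1γ : (γ z - 1) * a ≤ k := by
            have h2 : ((a:ℝ)+k)/a * a = (a:ℝ)+k := by field_simp
            nlinarith
          have hlkγ : (-l) * ((γ z - 1) * a) ≤ (-l) * k :=
            mul_le_mul_of_nonneg_left h1γ (by linarith)
          have hf0 : 0 ≤ f 0 := hf 0
          rw [hgapp z]
          have hγz := hγ0ge z
          have hkey : ((-l) * (γ z - 1)) * (a:ℝ) ≤ f 1 * (a:ℝ) := by
            linarith [mul_nonneg hak.le hf0]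
          have hkey2 : (-l) * (γ z - 1) ≤ f 1 := le_of_mul_le_mul_right hkey ha'
          have hεγ : ε * 1 ≤ ε * γ0 z := mul_le_mul_of_nonneg_left hγz hε.le
          rw [mul_one] at hεγ
          linarith [hkey2, hfz, hεγ]
      have hfin := hcomb γ l hG.1 hnn
      have h1 : 1 ≤ φ γ x := hγs γ hG x
      have h2 : (-l) * 1 ≤ (-l) * φ γ x :=
        mul_le_mul_of_nonneg_left h1 (by linarith)
      linarith
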